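/- Let G be a Hamiltonian graph of odd order n = 2t+1 ≥ 3 with Hamiltonian cycle v_1, ..., v_n, v_1. If there exists an index i (indices mod n) such that v_i and v_{i+2} are not adjacent in G, then G has an IPD. -/

import Mathlib

open SimpleGraph

variable {V : Type*} [Fintype V]

/-- P is a set of vertices inducing a path on n vertices in G. -/
def IsInducedPathOn (G : SimpleGraph V) (P : Set V) (n : ℕ) : Prop :=
  Nonempty (G.induce P ≃g pathGraph n)

/-- G has an induced path decomposition into induced paths each of order ≥ 2. -/
def HasIPD (G : SimpleGraph V) : Prop :=
  ∃ D : Set (Set V), Setoid.IsPartition D ∧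
    ∀ P ∈ D, ∃ n, 2 ≤ n ∧ IsInducedPathOn G P n


open scoped Classical

omit [Fintype V] in
lemma pair_path {G : SimpleGraph V} {a b : V} (hab : G.Adj a b) :
    IsInducedPathOn G {a, b} 2 := by
  have hne : a ≠ b := hab.ne
  refine ⟨SimpleGraph.Iso.symm ?_⟩
  refine ⟨⟨fun i => if i = 0 then ⟨a, by simp⟩ else ⟨b, by simp⟩,
      fun x => if (x : V) = a then 0 else 1, ?_, ?_⟩, ?_⟩
  · intro i
    fin_cases i <;> simp [hne.symm]
  · rintro ⟨x, hx⟩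
    rcases hx with h | h <;> subst h <;> simp [hne.symm]
  · intro i j
    fin_cases i <;> fin_cases j <;>
      simp [pathGraph_adj, hab, hab.symm, G.irrefl]

omit [Fintype V] in
lemma triple_path {G : SimpleGraph V} {a b c : V} (hac : a ≠ c)
    (hab : G.Adj a b) (hbc : G.Adj b c) (hnac : ¬ G.Adj a c) :
    IsInducedPathOn G {a, b, c} 3 := by
  have h1 : a ≠ b := hab.ne
  have h2 : b ≠ c := hbc.ne
  refine ⟨SimpleGraph.Iso.symm ?_⟩
  refine ⟨⟨fun i => if i = 0 then ⟨a, by simp⟩ else if i = 1 then ⟨b, by simp⟩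
      else ⟨c, by simp⟩,
      fun x => if (x : V) = a then 0 else if (x : V) = b then 1 else 2, ?_, ?_⟩, ?_⟩
  · intro i
    fin_cases i <;> simp [h1.symm, h2.symm, hac.symm]
  · rintro ⟨x, hx⟩
    rcases hx with h | h | h <;> subst h <;> simp [h1.symm, h2.symm, hac.symm, h1, h2, hac]
  · intro i j
    fin_cases i <;> fin_cases j <;>
      simp [pathGraph_adj, hab, hab.symm, hbc, hbc.symm, hnac, G.irrefl,
        show ¬G.Adj c a from fun h => hnac h.symm]

theorem hamiltonian_odd_missing_chord_IPD (G : SimpleGraph V) (n : ℕ)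
    (hn : n = Fintype.card V) (hodd : Odd n) (h3 : 3 ≤ n)
    (v : ZMod n → V) (hbij : Function.Bijective v)
    (hcyc : ∀ i : ZMod n, G.Adj (v i) (v (i + 1)))
    (hchord : ∃ i : ZMod n, ¬ G.Adj (v i) (v (i + 2))) :
    HasIPD G := by
  classical
  obtain ⟨i₀, hch⟩ := hchord
  haveI : NeZero n := ⟨by omega⟩
  obtain ⟨t, ht⟩ := hodd
  set w : ZMod n → V := fun j => v (i₀ + j) with hw
  have hwbij : Function.Bijective w :=
    hbij.comp (Equiv.addLeft i₀).bijective
  set e : ZMod n ≃ V := Equiv.ofBijective w hwbij with he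
  have heval : ∀ k : ZMod n, e k = w k := fun k => rfl
  have hval : ∀ (x : V) (k : ℕ), k < n →
      ((e.symm x).val = k ↔ x = w ((k : ℕ) : ZMod n)) := by
    intro x k hk
    constructor
    · intro h
      have h1 : e.symm x = ((k : ℕ) : ZMod n) := by
        have := congrArg (fun m : ℕ => ((m : ℕ) : ZMod n)) h
        simpa [ZMod.natCast_val, ZMod.cast_id] using this
      have h2 := congrArg e h1
      rw [Equiv.apply_symm_apply, heval] at h2
      exact h2
    · intro h
      have h1 : e.symm x = ((k : ℕ) : ZMod n) := by
        rw [h, ← heval, Equiv.symm_apply_apply]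
      rw [h1, ZMod.val_cast_of_lt hk]
  set g : V → ℕ := fun u =>
    if (e.symm u).val ≤ 2 then 0 else ((e.symm u).val + 1) / 2 - 1 with hg
  refine ⟨Setoid.classes (Setoid.ker g), Setoid.isPartition_classes _, ?_⟩
  intro P hP
  obtain ⟨y, rfl⟩ := hP
  set m : ℕ := (e.symm y).val with hm
  have hmn : m < n := ZMod.val_lt _
  by_cases hm2 : m ≤ 2
  · -- triple block
    have hgy : g y = 0 := by simp [hg, ← hm, hm2]
    have key : ∀ x : V, g x = 0 ↔ (e.symm x).val ≤ 2 := by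
      intro x
      simp only [hg]
      split <;> omega
    have hPeq : {x | Setoid.ker g x y} =
        ({w ((0:ℕ):ZMod n), w ((1:ℕ):ZMod n), w ((2:ℕ):ZMod n)} : Set V) := by
      ext x
      have hx0 := hval x 0 (by omega)
      have hx1 := hval x 1 (by omega)
      have hx2 := hval x 2 (by omega)
      simp only [Set.mem_setOf_eq, Setoid.ker_def, hgy, key, Set.mem_insert_iff,
        Set.mem_singleton_iff]
      constructor
      · intro h
        rcases (by omega : (e.symm x).val = 0 ∨ (e.symm x).val = 1 ∨ (e.symm x).val = 2)
          with h0 | h0 | h0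
        exacts [Or.inl (hx0.mp h0), Or.inr (Or.inl (hx1.mp h0)), Or.inr (Or.inr (hx2.mp h0))]
      · rintro (h | h | h)
        · have := hx0.mpr h; omega
        · have := hx1.mpr h; omega
        · have := hx2.mpr h; omega
    rw [hPeq]
    have hw0 : w ((0:ℕ):ZMod n) = v i₀ := by simp [hw]
    have hw1 : w ((1:ℕ):ZMod n) = v (i₀ + 1) := by norm_num [hw]
    have hw2 : w ((2:ℕ):ZMod n) = v (i₀ + 2) := by norm_num [hw]
    refine ⟨3, by norm_num, ?_⟩
    rw [hw0, hw1, hw2]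
    refine triple_path ?_ (hcyc i₀) ?_ hch
    · intro hcontra
      have h0 : i₀ + 0 = i₀ + 2 := by simpa using hbij.injective hcontra
      have h1 : ((0:ℕ) : ZMod n) = ((2:ℕ) : ZMod n) := by
        push_cast
        exact add_left_cancel h0
      have h2 := congrArg ZMod.val h1
      rw [ZMod.val_cast_of_lt (by omega : (0:ℕ) < n),
        ZMod.val_cast_of_lt (by omega : (2:ℕ) < n)] at h2
      omega
    · have h4 := hcyc (i₀ + 1)
      have h2 : i₀ + 1 + 1 = i₀ + 2 := by ring
      rwa [h2] at h4
  · -- pair block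
    set c : ℕ := (m + 1) / 2 - 1 with hcdef
    have hgy : g y = c := by
      simp only [hg, ← hm, if_neg hm2]
      exact hcdef.symm
    have key : ∀ x : V, g x = c ↔
        ((e.symm x).val = 2*c+1 ∨ (e.symm x).val = 2*c+2) := by
      intro x
      simp only [hg]
      split <;> omega
    have hub : 2*c+2 < n := by omega
    have hPeq : {x | Setoid.ker g x y} =
        ({w ((2*c+1:ℕ):ZMod n), w ((2*c+2:ℕ):ZMod n)} : Set V) := by
      ext x
      have hx1 := hval x (2*c+1) (by omega)
      have hx2 := hval x (2*c+2) (by omega)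
      simp only [Set.mem_setOf_eq, Setoid.ker_def, hgy, key, Set.mem_insert_iff,
        Set.mem_singleton_iff, hx1, hx2]
    rw [hPeq]
    refine ⟨2, le_refl 2, pair_path ?_⟩
    have hadj := hcyc (i₀ + ((2*c+1:ℕ):ZMod n))
    have hcast : ((2*c+2:ℕ):ZMod n) = ((2*c+1:ℕ):ZMod n) + 1 := by push_cast; ring
    simp only [hw]
    rw [hcast, ← add_assoc]
    exact hadj
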